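/- Let F be a finite field, M an element of GL_2(F) of finite multiplicative order d, and a an integer relatively prime to d. If tr(M) = 0, then tr(M^a) = 0. -/

import Mathlib

private lemma pow_lemma {F : Type*} [Field F] (A : Matrix (Fin 2) (Fin 2) F) (c : F)
    (h2 : A * A = c • 1) (k : ℕ) :
    A ^ (2 * k) = (c ^ k) • (1 : Matrix (Fin 2) (Fin 2) F) ∧ A ^ (2 * k + 1) = (c ^ k) • A := by
  induction k with
  | zero => simp
  | succ n ih =>
    obtain ⟨ih1, ih2⟩ := ih
    constructor
    · have : 2 * (n + 1) = (2 * n + 1) + 1 := by ring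
      rw [this, pow_succ, ih2, smul_mul_assoc, h2, smul_smul, pow_succ]
    · have : 2 * (n + 1) + 1 = (2 * n + 1) + 1 + 1 := by ring
      rw [this, pow_succ, pow_succ, ih2, smul_mul_assoc, h2, smul_smul, ← pow_succ,
        Matrix.smul_mul, Matrix.one_mul]

/-- Let `F` be a finite field, `M ∈ GL₂(F)` of multiplicative order `d`, and `a` an
integer relatively prime to `d`. If `tr M = 0`, then `tr (M ^ a) = 0`. -/
theorem stmt_0 (F : Type*) [Field F] [Fintype F]
    (M : GL (Fin 2) F) (d : ℕ) (hd : orderOf M = d)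
    (a : ℤ) (ha : Int.gcd a (d : ℤ) = 1)
    (htr : Matrix.trace (M : Matrix (Fin 2) (Fin 2) F) = 0) :
    Matrix.trace ((M ^ a : GL (Fin 2) F) : Matrix (Fin 2) (Fin 2) F) = 0 := by
  set A : Matrix (Fin 2) (Fin 2) F := (M : Matrix (Fin 2) (Fin 2) F) with hAdef
  have hd0 : 0 < d := hd ▸ orderOf_pos M
  have hdz : (d : ℤ) ≠ 0 := by exact_mod_cast hd0.ne'
  -- reduce to natural power
  set b : ℕ := (a % (d : ℤ)).toNat with hbdef
  have hbcast : (b : ℤ) = a % (d : ℤ) :=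
    Int.toNat_of_nonneg (Int.emod_nonneg a hdz)
  have hMb : M ^ a = M ^ b := by
    rw [← zpow_natCast, hbcast, ← hd, zpow_mod_orderOf]
  -- Cayley-Hamilton for trace-zero 2x2
  have h11 : A 1 1 = - A 0 0 := by
    rw [Matrix.trace_fin_two] at htr; linear_combination htr
  set c : F := -(A.det) with hcdef
  have h2 : A * A = c • 1 := by
    ext i j
    fin_cases i <;> fin_cases j <;>
      simp [Matrix.mul_apply, Fin.sum_univ_two, Matrix.det_fin_two, h11, Matrix.one_apply,
        hcdef] <;> ring
  have key := pow_lemma A c h2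
  have hcoe : ∀ n : ℕ, ((M ^ n : GL (Fin 2) F) : Matrix (Fin 2) (Fin 2) F) = A ^ n :=
    fun n => Units.val_pow_eq_pow_val M n
  rw [hMb, hcoe]
  rcases Nat.even_or_odd b with ⟨k, hk⟩ | ⟨k, hk⟩
  · -- b even; then d must be odd
    have hdodd : Odd d := by
      by_contra hdo
      rw [Nat.not_odd_iff_even] at hdo
      obtain ⟨m, hm⟩ := hdo
      have hd2 : (2 : ℤ) ∣ (d : ℤ) := ⟨m, by omega⟩
      have hb2 : (2 : ℤ) ∣ a % (d : ℤ) := by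
        rw [← hbcast]; exact ⟨k, by omega⟩
      have heq := Int.emod_add_mul_ediv a (d : ℤ)
      have hdm2 : (2 : ℤ) ∣ (d : ℤ) * (a / (d : ℤ)) := hd2.mul_right _
      have h2a : (2 : ℤ) ∣ a := by omega
      have hg : (2 : ℤ) ∣ ((Int.gcd a (d : ℤ) : ℕ) : ℤ) := Int.dvd_coe_gcd h2a hd2
      rw [ha] at hg
      norm_num at hg
    obtain ⟨m, hm⟩ := hdodd
    have hAd : A ^ d = 1 := by
      have h1 : M ^ d = 1 := hd ▸ pow_orderOf_eq_one M
      calc A ^ d = ((M ^ d : GL (Fin 2) F) : Matrix (Fin 2) (Fin 2) F) := (hcoe d).symm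
        _ = 1 := by rw [h1]; rfl
    have h20 : (2 : F) = 0 := by
      have hAd2 := (key m).2
      rw [← hm, hAd] at hAd2
      have ht := congrArg Matrix.trace hAd2
      rw [Matrix.trace_one, Matrix.trace_smul, htr] at ht
      simpa using ht
    have hbk : b = 2 * k := by omega
    rw [hbk, (key k).1, Matrix.trace_smul, Matrix.trace_one]
    simp [Fintype.card_fin, h20]
  · rw [hk, (key k).2, Matrix.trace_smul, htr, smul_zero]
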